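/- arXiv:2209.14356 — 2 statements merged into one kernel-verified Lean document; each statement's English description precedes it below -/
import Mathlib

section
/- A linear map T: V ⊗ V → V ⊗ V satisfies the pentagon equation T₂₃T₁₂ = T₁₂T₁₃T₂₃ if and only if T' := τ ∘ T satisfies the 3-cocycle condition (T' ⊗ id)∘(id ⊗ τ)∘(T' ⊗ id) = (id ⊗ T')∘(T' ⊗ id)∘(id ⊗ T'). -/
set_option linter.unusedSectionVars false


open TensorProduct

variable {V : Type*} [AddCommGroup V] [Module ℂ V] [FiniteDimensional ℂ V]

/-- The twist map `τ : V ⊗ V → V ⊗ V`, `x ⊗ y ↦ y ⊗ x`. -/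
noncomputable def twist (V : Type*) [AddCommGroup V] [Module ℂ V] :
    V ⊗[ℂ] V →ₗ[ℂ] V ⊗[ℂ] V :=
  (TensorProduct.comm ℂ V V).toLinearMap

/-- `T₁₂ = T ⊗ id` acting on `V ⊗ V ⊗ V`. -/
noncomputable def op12 (T : V ⊗[ℂ] V →ₗ[ℂ] V ⊗[ℂ] V) :
    V ⊗[ℂ] (V ⊗[ℂ] V) →ₗ[ℂ] V ⊗[ℂ] (V ⊗[ℂ] V) :=
  (TensorProduct.assoc ℂ V V V).toLinearMap ∘ₗ
    TensorProduct.map T LinearMap.id ∘ₗ (TensorProduct.assoc ℂ V V V).symm.toLinearMap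

/-- `T₂₃ = id ⊗ T` acting on `V ⊗ V ⊗ V`. -/
noncomputable def op23 (T : V ⊗[ℂ] V →ₗ[ℂ] V ⊗[ℂ] V) :
    V ⊗[ℂ] (V ⊗[ℂ] V) →ₗ[ℂ] V ⊗[ℂ] (V ⊗[ℂ] V) :=
  LinearMap.lTensor V T

/-- `T₁₃ = (id ⊗ τ)⁻¹ ∘ (T ⊗ id) ∘ (id ⊗ τ)` acting on `V ⊗ V ⊗ V`. -/
noncomputable def op13 (T : V ⊗[ℂ] V →ₗ[ℂ] V ⊗[ℂ] V) :
    V ⊗[ℂ] (V ⊗[ℂ] V) →ₗ[ℂ] V ⊗[ℂ] (V ⊗[ℂ] V) :=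
  LinearMap.lTensor V (TensorProduct.comm ℂ V V).symm.toLinearMap ∘ₗ
    op12 T ∘ₗ LinearMap.lTensor V (twist V)

/-- The pentagon equation `T₂₃T₁₂ = T₁₂T₁₃T₂₃`. -/
def PentagonEq (T : V ⊗[ℂ] V →ₗ[ℂ] V ⊗[ℂ] V) : Prop :=
  op23 T ∘ₗ op12 T = op12 T ∘ₗ op13 T ∘ₗ op23 T

/-- The Yang–Baxter equation `R₁₂R₂₃R₁₂ = R₂₃R₁₂R₂₃`. -/
def YangBaxterEq (R : V ⊗[ℂ] V →ₗ[ℂ] V ⊗[ℂ] V) : Prop :=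
  op12 R ∘ₗ op23 R ∘ₗ op12 R = op23 R ∘ₗ op12 R ∘ₗ op23 R

/-- The 3-cocycle condition `(T'⊗id)∘(id⊗τ)∘(T'⊗id) = (id⊗T')∘(T'⊗id)∘(id⊗T')`. -/
def ThreeCocycle (T' : V ⊗[ℂ] V →ₗ[ℂ] V ⊗[ℂ] V) : Prop :=
  op12 T' ∘ₗ LinearMap.lTensor V (twist V) ∘ₗ op12 T' =
    op23 T' ∘ₗ op12 T' ∘ₗ op23 T'

lemma op12_comp (S T : V ⊗[ℂ] V →ₗ[ℂ] V ⊗[ℂ] V) :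
    op12 (S ∘ₗ T) = op12 S ∘ₗ op12 T := by
  unfold op12; ext x y z; simp

lemma twist_twist : twist V ∘ₗ twist V = LinearMap.id := by
  unfold twist; ext x y; simp

lemma op12_id : op12 (LinearMap.id : V ⊗[ℂ] V →ₗ[ℂ] V ⊗[ℂ] V) = LinearMap.id := by
  unfold op12; ext x y z; simp

lemma comm_symm_eq : (TensorProduct.comm ℂ V V).symm.toLinearMap = twist V := by
  unfold twist; ext x y; simp

lemma op13_eq (T : V ⊗[ℂ] V →ₗ[ℂ] V ⊗[ℂ] V) :
    op13 T = op23 (twist V) ∘ₗ op12 T ∘ₗ op23 (twist V) := by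
  unfold op13 op23
  rw [comm_symm_eq]

lemma braid : op23 (twist V) ∘ₗ op12 (twist V) ∘ₗ op23 (twist V)
    = op12 (twist V) ∘ₗ op23 (twist V) ∘ₗ op12 (twist V) := by
  unfold op12 op23 twist
  ext x y z
  simp

lemma op23_eq (T : V ⊗[ℂ] V →ₗ[ℂ] V ⊗[ℂ] V) :
    op23 T = op12 (twist V) ∘ₗ op23 (twist V) ∘ₗ op12 T ∘ₗ op23 (twist V) ∘ₗ op12 (twist V) := by
  ext x y z
  simp only [AlgebraTensorModule.curry_apply, TensorProduct.curry_apply,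
    LinearMap.coe_restrictScalars, LinearMap.comp_apply]
  have h1 : (op23 (twist V)) ((op12 (twist V)) (x ⊗ₜ[ℂ] (y ⊗ₜ[ℂ] z))) = y ⊗ₜ (z ⊗ₜ x) := by
    simp [op12, op23, twist]
  rw [h1]
  have h3 : op12 T (y ⊗ₜ[ℂ] (z ⊗ₜ[ℂ] x)) = (TensorProduct.assoc ℂ V V V) (T (y ⊗ₜ z) ⊗ₜ x) := by
    simp [op12]
  rw [h3]
  show (op23 T) (x ⊗ₜ[ℂ] (y ⊗ₜ[ℂ] z)) = _
  have h4 : (op23 T) (x ⊗ₜ[ℂ] (y ⊗ₜ[ℂ] z)) = x ⊗ₜ T (y ⊗ₜ z) := by simp [op23]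
  rw [h4]
  generalize T (y ⊗ₜ[ℂ] z) = u
  induction u using TensorProduct.induction_on with
  | zero => simp
  | tmul a b => simp [op12, op23, twist]
  | add a b ha hb =>
      simp only [TensorProduct.add_tmul, TensorProduct.tmul_add, map_add] at ha hb ⊢
      rw [ha, hb]

lemma pp : op12 (twist V) ∘ₗ op12 (twist V) = LinearMap.id := by
  rw [← op12_comp, twist_twist, op12_id]

lemma qq : op23 (twist V) ∘ₗ op23 (twist V) = LinearMap.id := by
  show LinearMap.lTensor V (twist V) ∘ₗ LinearMap.lTensor V (twist V) = _
  rw [← LinearMap.lTensor_comp, twist_twist, LinearMap.lTensor_id]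

lemma pp' (X : V ⊗[ℂ] (V ⊗[ℂ] V) →ₗ[ℂ] V ⊗[ℂ] (V ⊗[ℂ] V)) :
    op12 (twist V) ∘ₗ op12 (twist V) ∘ₗ X = X := by
  rw [← LinearMap.comp_assoc, pp, LinearMap.id_comp]

lemma qq' (X : V ⊗[ℂ] (V ⊗[ℂ] V) →ₗ[ℂ] V ⊗[ℂ] (V ⊗[ℂ] V)) :
    op23 (twist V) ∘ₗ op23 (twist V) ∘ₗ X = X := by
  rw [← LinearMap.comp_assoc, qq, LinearMap.id_comp]

lemma braid' (X : V ⊗[ℂ] (V ⊗[ℂ] V) →ₗ[ℂ] V ⊗[ℂ] (V ⊗[ℂ] V)) :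
    op23 (twist V) ∘ₗ op12 (twist V) ∘ₗ op23 (twist V) ∘ₗ X
      = op12 (twist V) ∘ₗ op23 (twist V) ∘ₗ op12 (twist V) ∘ₗ X := by
  have h : (op23 (twist V) ∘ₗ op12 (twist V) ∘ₗ op23 (twist V)) ∘ₗ X
      = (op12 (twist V) ∘ₗ op23 (twist V) ∘ₗ op12 (twist V)) ∘ₗ X := by rw [braid]
  simpa only [LinearMap.comp_assoc] using h

theorem pentagon_iff_threeCocycle (T : V ⊗[ℂ] V →ₗ[ℂ] V ⊗[ℂ] V) :
    PentagonEq T ↔ ThreeCocycle (twist V ∘ₗ T) := by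
  have hq : LinearMap.lTensor V (twist V) = op23 (twist V) := rfl
  unfold PentagonEq ThreeCocycle
  rw [hq, op13_eq, op23_eq T, op23_eq (twist V ∘ₗ T), op12_comp]
  constructor <;> intro h <;>
  · have h2 := congrArg
      (fun X => op12 (twist V) ∘ₗ op23 (twist V) ∘ₗ op12 (twist V) ∘ₗ X) h
    simp only [LinearMap.comp_assoc, pp', qq', braid', LinearMap.id_comp,
      LinearMap.comp_id] at h2 ⊢
    exact h2
end

section
/- Let B be a bialgebra over ℂ with multiplication m: B ⊗ B → B and comultiplication δ: B → B ⊗ B. Then the map T := (id_B ⊗ m) ∘ (δ ⊗ id_B) : B ⊗ B → B ⊗ B satisfies the pentagon equation T₂₃T₁₂ = T₁₂T₁₃T₂₃. -/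
open TensorProduct

variable {V : Type*} [AddCommGroup V] [Module ℂ V] [FiniteDimensional ℂ V]

/-- The fusion operator `T = (id ⊗ m) ∘ (δ ⊗ id)` of a bialgebra `B`. -/
noncomputable def fusionOp (B : Type*) [Ring B] [Bialgebra ℂ B] :
    B ⊗[ℂ] B →ₗ[ℂ] B ⊗[ℂ] B :=
  LinearMap.lTensor B (LinearMap.mul' ℂ B) ∘ₗ
    (TensorProduct.assoc ℂ B B B).toLinearMap ∘ₗ
      LinearMap.rTensor B Coalgebra.comul


set_option synthInstance.maxHeartbeats 400000
set_option maxHeartbeats 1600000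

lemma fusionOp_repr {B : Type*} [Ring B] [Bialgebra ℂ B] (x y : B)
    {ι : Type*} (s : Finset ι) (l r : ι → B)
    (h : Coalgebra.comul (R := ℂ) x = ∑ i ∈ s, l i ⊗ₜ[ℂ] r i) :
    fusionOp B (x ⊗ₜ y) = ∑ i ∈ s, l i ⊗ₜ[ℂ] (r i * y) := by
  simp [fusionOp, h, sum_tmul, map_sum]

lemma op12_tmul {B : Type*} [Ring B] [Bialgebra ℂ B] (x y z : B) :
    op12 (fusionOp B) (x ⊗ₜ (y ⊗ₜ z)) =
      (TensorProduct.assoc ℂ B B B) ((fusionOp B (x ⊗ₜ y)) ⊗ₜ z) := by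
  simp [op12]

lemma pentagon_pure (B : Type*) [Ring B] [Bialgebra ℂ B] (x y z : B) :
    (LinearMap.lTensor B (fusionOp B)) (op12 (fusionOp B) (x ⊗ₜ (y ⊗ₜ z))) =
      op12 (fusionOp B)
        ((LinearMap.lTensor B (TensorProduct.comm ℂ B B).symm.toLinearMap ∘ₗ
          op12 (fusionOp B) ∘ₗ
          LinearMap.lTensor B (TensorProduct.comm ℂ B B).toLinearMap)
          ((LinearMap.lTensor B (fusionOp B)) (x ⊗ₜ (y ⊗ₜ z)))) := by
  set r := Coalgebra.Repr.arbitrary ℂ x with hr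
  set t := Coalgebra.Repr.arbitrary ℂ y with ht
  set u : (i : B × B) → Coalgebra.Repr ℂ (r.left i) (B × B) :=
    fun i => Coalgebra.Repr.arbitrary ℂ (r.left i) with hu
  set s : (i : B × B) → Coalgebra.Repr ℂ (r.right i) (B × B) :=
    fun i => Coalgebra.Repr.arbitrary ℂ (r.right i) with hs
  have hL : (LinearMap.lTensor B (fusionOp B)) (op12 (fusionOp B) (x ⊗ₜ (y ⊗ₜ z))) =
      ∑ i ∈ r.index, ∑ p ∈ (s i).index ×ˢ t.index,
        r.left i ⊗ₜ[ℂ] (((s i).left p.1 * t.left p.2) ⊗ₜ[ℂ]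
          ((s i).right p.1 * t.right p.2 * z)) := by
    rw [op12_tmul, fusionOp_repr x y r.index r.left r.right r.eq.symm]
    rw [sum_tmul, map_sum, map_sum]
    refine Finset.sum_congr rfl fun i _ => ?_
    rw [assoc_tmul, LinearMap.lTensor_tmul]
    rw [fusionOp_repr (r.right i * y) z ((s i).index ×ˢ t.index)
      (fun p => (s i).left p.1 * t.left p.2) (fun p => (s i).right p.1 * t.right p.2) ?_]
    · rw [tmul_sum]
    · rw [Bialgebra.comul_mul, ← (s i).eq, ← t.eq, Finset.sum_mul_sum]
      rw [Finset.sum_product]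
      simp [Algebra.TensorProduct.tmul_mul_tmul]
  have hR : op12 (fusionOp B)
        ((LinearMap.lTensor B (TensorProduct.comm ℂ B B).symm.toLinearMap ∘ₗ
          op12 (fusionOp B) ∘ₗ
          LinearMap.lTensor B (TensorProduct.comm ℂ B B).toLinearMap)
          ((LinearMap.lTensor B (fusionOp B)) (x ⊗ₜ (y ⊗ₜ z)))) =
      ∑ k ∈ t.index, ∑ i ∈ r.index, ∑ j ∈ (u i).index,
        (u i).left j ⊗ₜ[ℂ] (((u i).right j * t.left k) ⊗ₜ[ℂ]
          (r.right i * (t.right k * z))) := by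
    rw [LinearMap.lTensor_tmul, fusionOp_repr y z t.index t.left t.right t.eq.symm,
      tmul_sum]
    simp only [map_sum]
    refine Finset.sum_congr rfl fun k _ => ?_
    simp only [LinearMap.comp_apply, LinearMap.lTensor_tmul, LinearEquiv.coe_coe, comm_tmul]
    rw [op12_tmul, fusionOp_repr x (t.right k * z) r.index r.left r.right r.eq.symm,
      sum_tmul]
    simp only [map_sum]
    refine Finset.sum_congr rfl fun i _ => ?_
    rw [assoc_tmul, LinearMap.lTensor_tmul]
    simp only [LinearEquiv.coe_coe, comm_symm_tmul]
    rw [op12_tmul,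
      fusionOp_repr (r.left i) (t.left k) (u i).index (u i).left (u i).right (u i).eq.symm,
      sum_tmul]
    simp only [map_sum]
    simp
  rw [hL, hR]
  have key := Coalgebra.sum_tmul_tmul_eq r u s
  simp only [Finset.sum_product]
  rw [Finset.sum_congr rfl fun i _ =>
    Finset.sum_comm (s := (s i).index) (t := t.index)
      (f := fun p q => r.left i ⊗ₜ[ℂ] (((s i).left p * t.left q) ⊗ₜ[ℂ]
        ((s i).right p * t.right q * z)))]
  rw [Finset.sum_comm]
  refine Finset.sum_congr rfl fun k _ => ?_
  have h2 := congrArg (LinearMap.lTensor B (TensorProduct.map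
    (LinearMap.mulRight ℂ (t.left k)) (LinearMap.mulRight ℂ (t.right k * z)))) key
  simp only [map_sum, LinearMap.lTensor_tmul, TensorProduct.map_tmul,
    LinearMap.mulRight_apply] at h2
  simp only [mul_assoc]
  exact h2.symm

theorem bialgebra_fusionOp_pentagon (B : Type*) [Ring B] [Bialgebra ℂ B] :
    PentagonEq (fusionOp B) := by
  unfold PentagonEq op23 op13 twist
  apply TensorProduct.ext'
  intro x w
  induction w using TensorProduct.induction_on with
  | zero => simp
  | add a b ha hb => simp only [tmul_add, map_add, ha, hb]
  | tmul y z =>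
    simp only [LinearMap.comp_apply]
    exact pentagon_pure B x y z
end
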